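/- Let A ⊆ C be a ring extension and B any commutative ring. Then A ⊆ C satisfies going down if and only if A × B ⊆ C × B (componentwise inclusion) satisfies going down. -/

import Mathlib

/-- Going down for a ring homomorphism. -/
def GoingDown {R S : Type*} [CommRing R] [CommRing S] (f : R →+* S) : Prop :=
  ∀ (P₁ P₂ : Ideal R), P₁.IsPrime → P₂.IsPrime → P₁ ≤ P₂ →
    ∀ Q₂ : Ideal S, Q₂.IsPrime → Q₂.comap f = P₂ →
      ∃ Q₁ : Ideal S, Q₁.IsPrime ∧ Q₁ ≤ Q₂ ∧ Q₁.comap f = P₁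

lemma comap_prodMap_prod {R S R' S' : Type*} [CommRing R] [CommRing S] [CommRing R']
    [CommRing S'] (f : R →+* R') (g : S →+* S') (I : Ideal R') (J : Ideal S') :
    (Ideal.prod I J).comap (f.prodMap g) = Ideal.prod (I.comap f) (J.comap g) := by
  ext ⟨a, b⟩
  simp [Ideal.mem_prod]

lemma prod_le_prod_iff {R S : Type*} [CommRing R] [CommRing S]
    {I I' : Ideal R} {J J' : Ideal S} :
    Ideal.prod I J ≤ Ideal.prod I' J' ↔ I ≤ I' ∧ J ≤ J' := by
  constructor
  · intro h
    exact ⟨fun x hx => (h (show (⟨x, 0⟩ : R × S) ∈ Ideal.prod I J from ⟨hx, J.zero_mem⟩)).1,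
      fun y hy => (h (show (⟨0, y⟩ : R × S) ∈ Ideal.prod I J from ⟨I.zero_mem, hy⟩)).2⟩
  · rintro ⟨h₁, h₂⟩ ⟨a, b⟩ ⟨ha, hb⟩
    exact ⟨h₁ ha, h₂ hb⟩

theorem statement6 (A C B : Type*) [CommRing A] [CommRing C] [CommRing B] [Algebra A C]
    (hinj : Function.Injective (algebraMap A C)) :
    GoingDown (algebraMap A C) ↔ GoingDown ((algebraMap A C).prodMap (RingHom.id B)) := by
  set f := algebraMap A C
  constructor
  · intro gd P₁ P₂ hP₁ hP₂ hle Q₂ hQ₂ hcom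
    rcases (Ideal.ideal_prod_prime Q₂).mp hQ₂ with ⟨q, hq, rfl⟩ | ⟨q, hq, rfl⟩
    · -- Q₂ = prod q ⊤
      have hcom' : Ideal.prod (q.comap f) (⊤ : Ideal B) = P₂ := by
        rw [← hcom, comap_prodMap_prod]; simp
      rcases (Ideal.ideal_prod_prime P₁).mp hP₁ with ⟨p, hp, rfl⟩ | ⟨p, hp, rfl⟩
      · -- P₁ = prod p ⊤
        have hpq : p ≤ q.comap f := by
          rw [← hcom'] at hle
          exact (prod_le_prod_iff.mp hle).1
        obtain ⟨q₁, hq₁, hq₁le, hq₁com⟩ :=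
          gd p (q.comap f) hp (Ideal.comap_isPrime f q) hpq q hq rfl
        refine ⟨Ideal.prod q₁ ⊤, ?_, ?_, ?_⟩
        · haveI := hq₁; exact Ideal.isPrime_ideal_prod_top
        · exact prod_le_prod_iff.mpr ⟨hq₁le, le_rfl⟩
        · rw [comap_prodMap_prod, hq₁com]; simp
      · -- P₁ = prod ⊤ p, impossible
        exfalso
        rw [← hcom'] at hle
        have := (prod_le_prod_iff.mp hle).1
        exact (Ideal.comap_isPrime f q).ne_top (top_le_iff.mp this)
    · -- Q₂ = prod ⊤ q
      have hcom' : Ideal.prod (⊤ : Ideal A) q = P₂ := by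
        rw [← hcom, comap_prodMap_prod]; simp
      rcases (Ideal.ideal_prod_prime P₁).mp hP₁ with ⟨p, hp, rfl⟩ | ⟨p, hp, rfl⟩
      · exfalso
        rw [← hcom'] at hle
        have := (prod_le_prod_iff.mp hle).2
        exact hq.ne_top (top_le_iff.mp this)
      · refine ⟨Ideal.prod ⊤ p, ?_, ?_, ?_⟩
        · haveI := hp; exact Ideal.isPrime_ideal_prod_top'
        · rw [← hcom'] at hle
          exact prod_le_prod_iff.mpr ⟨le_top, (prod_le_prod_iff.mp hle).2⟩
        · rw [comap_prodMap_prod]; simp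
  · intro gd p₁ p₂ hp₁ hp₂ hle q₂ hq₂ hcom
    haveI := hp₁; haveI := hp₂; haveI := hq₂
    obtain ⟨Q₁, hQ₁, hQ₁le, hQ₁com⟩ :=
      gd (Ideal.prod p₁ ⊤) (Ideal.prod p₂ ⊤) Ideal.isPrime_ideal_prod_top
        Ideal.isPrime_ideal_prod_top (prod_le_prod_iff.mpr ⟨hle, le_rfl⟩)
        (Ideal.prod q₂ ⊤) Ideal.isPrime_ideal_prod_top
        (by rw [comap_prodMap_prod, hcom]; simp)
    rcases (Ideal.ideal_prod_prime Q₁).mp hQ₁ with ⟨q, hq, rfl⟩ | ⟨q, hq, rfl⟩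
    · refine ⟨q, hq, (prod_le_prod_iff.mp hQ₁le).1, ?_⟩
      rw [comap_prodMap_prod] at hQ₁com
      simpa using hQ₁com
    · exfalso
      rw [comap_prodMap_prod] at hQ₁com
      have := (Ideal.prod_inj.mp (by simpa using hQ₁com)).1
      exact hp₁.ne_top this.symm
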